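/- Let C be a cycle in a 2-vertex-connected graph G, with C ≠ G. Fix an origin on C and number the vertices of C clockwise. An earring of C is a connected component of G − V(C); its clasps are the vertices of C adjacent to it. Define the arc of an earring as the clockwise path along C from its first (lowest-numbered) clasp to its last (highest-numbered) clasp. Let H be an earring whose arc has minimum length (number of edges). Then for every segment S contained in the arc of H (a subpath of C whose endpoints are clasps of earrings and whose internal vertices are clasps of no earring), the graph G − S obtained by deleting the edges and internal vertices of S is 2-vertex-connected. -/

import Mathlib

open SimpleGraph

/-- A graph is 2-vertex-connected: at least 3 vertices and deleting any single
vertex leaves a connected graph. -/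
def Graph2Conn {V : Type*} (G : SimpleGraph V) : Prop :=
  3 ≤ Nat.card V ∧ ∀ v : V, (G.induce {w | w ≠ v}).Connected

/-- Vertices outside the cycle `C`. -/
def cycOutside {V : Type*} {G : SimpleGraph V} {o : V} (C : G.Walk o o) : Set V :=
  {x | x ∉ C.support}

/-- The graph `G - V(C)`, whose connected components are the earrings of `C`. -/
def earGraph {V : Type*} {G : SimpleGraph V} {o : V} (C : G.Walk o o) :
    SimpleGraph ↥(cycOutside C) :=
  G.induce (cycOutside C)

/-- `x` is a clasp of the earring `K`: it lies on `C` and is adjacent to `K`. -/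
def isClasp {V : Type*} {G : SimpleGraph V} {o : V} (C : G.Walk o o)
    (K : (earGraph C).ConnectedComponent) (x : V) : Prop :=
  x ∈ C.support ∧
    ∃ y : ↥(cycOutside C), (earGraph C).connectedComponentMk y = K ∧ G.Adj x ↑y

/-- Clockwise index of a vertex on the cycle `C` (the origin `o` has index 0). -/
def cidx {V : Type*} [DecidableEq V] {G : SimpleGraph V} {o : V}
    (C : G.Walk o o) (x : V) : ℕ :=
  C.support.dropLast.idxOf x

/-- Index of the first (lowest-numbered) clasp of the earring `K`. -/
noncomputable def firstClasp {V : Type*} [DecidableEq V] {G : SimpleGraph V} {o : V}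
    (C : G.Walk o o) (K : (earGraph C).ConnectedComponent) : ℕ :=
  sInf {n | ∃ x, isClasp C K x ∧ cidx C x = n}

/-- Index of the last (highest-numbered) clasp of the earring `K`. -/
noncomputable def lastClasp {V : Type*} [DecidableEq V] {G : SimpleGraph V} {o : V}
    (C : G.Walk o o) (K : (earGraph C).ConnectedComponent) : ℕ :=
  sSup {n | ∃ x, isClasp C K x ∧ cidx C x = n}

/-- Length (number of edges) of the arc of the earring `K`. -/
noncomputable def arcLen {V : Type*} [DecidableEq V] {G : SimpleGraph V} {o : V}
    (C : G.Walk o o) (K : (earGraph C).ConnectedComponent) : ℕ :=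
  lastClasp C K - firstClasp C K

/-- `x` is an anchor: a clasp of some earring. -/
def isAnchor {V : Type*} {G : SimpleGraph V} {o : V} (C : G.Walk o o) (x : V) : Prop :=
  ∃ K, isClasp C K x

namespace SegAux

variable {V : Type*} {G : SimpleGraph V}

/-- support as a map of getVert over range. -/
lemma support_eq_map {u w : V} (W : G.Walk u w) :
    W.support = (List.range (W.length + 1)).map W.getVert := by
  induction W with
  | nil => simp [List.range_succ]
  | cons h W ih =>
    rw [Walk.support_cons, ih, Walk.length_cons]
    rw [List.range_succ_eq_map, List.range_succ_eq_map]
    simp only [List.map_cons, Walk.getVert_zero, List.map_map]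
    have h2 : ((Walk.cons h W).getVert ∘ Nat.succ) = W.getVert := by
      funext i; simp [Walk.getVert_cons_succ]
    rw [h2, List.range_succ_eq_map]
    simp [Function.comp]

lemma getVert_mem_support {u w : V} (W : G.Walk u w) (i : ℕ) :
    W.getVert i ∈ W.support := by
  rcases le_or_gt i W.length with h | h
  · exact Walk.mem_support_iff_exists_getVert.mpr ⟨i, rfl, h⟩
  · rw [W.getVert_of_length_le h.le]
    exact W.end_mem_support

lemma edge_consec {u w : V} (W : G.Walk u w) {i : ℕ} (hi : i < W.length) :
    s(W.getVert i, W.getVert (i + 1)) ∈ W.edges := by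
  induction W generalizing i with
  | nil => simp at hi
  | cons h W ih =>
    cases i with
    | zero => simp [Walk.getVert_zero]
    | succ j =>
      rw [Walk.length_cons] at hi
      exact List.mem_cons_of_mem _ (ih (Nat.lt_of_succ_lt_succ hi))

lemma edges_eq_consec {u w : V} (W : G.Walk u w) {e : Sym2 V} (he : e ∈ W.edges) :
    ∃ i < W.length, e = s(W.getVert i, W.getVert (i + 1)) := by
  induction W with
  | nil => simp at he
  | cons h W ih =>
    rcases List.mem_cons.mp he with rfl | he'
    · exact ⟨0, by simp [Walk.length_cons], by simp⟩
    · obtain ⟨i, hi, rfl⟩ := ih he'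
      exact ⟨i + 1, by simpa [Walk.length_cons] using Nat.succ_lt_succ hi, rfl⟩

lemma path_getVert_inj {u w : V} {W : G.Walk u w} (hW : W.IsPath) {i j : ℕ}
    (hi : i ≤ W.length) (hj : j ≤ W.length) (h : W.getVert i = W.getVert j) : i = j := by
  have hnd := hW.support_nodup
  rw [support_eq_map] at hnd
  have h1 : i < W.length + 1 := Nat.lt_succ_of_le hi
  have h2 : j < W.length + 1 := Nat.lt_succ_of_le hj
  have hlen : ((List.range (W.length + 1)).map W.getVert).length = W.length + 1 := by simp
  have hgi : ((List.range (W.length + 1)).map W.getVert)[i]'(by omega) = W.getVert i := by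
    simp
  have hgj : ((List.range (W.length + 1)).map W.getVert)[j]'(by omega) = W.getVert j := by
    simp
  exact (List.Nodup.getElem_inj_iff hnd (hi := by omega) (hj := by omega)).mp
    (by rw [hgi, hgj]; exact h)

/-- The hom from an induced subgraph to the ambient graph. -/
def outHom (s : Set V) : G.induce s →g G := ⟨Subtype.val, fun {a b} h => h⟩

/-- The vertex set of the conclusion graph. -/
def FV {p q : V} (Sg : G.Walk p q) : Set V := {x | x ∉ Sg.support ∨ x = p ∨ x = q}

/-- The deleted edge set. -/
def ES {p q : V} (Sg : G.Walk p q) : Set (Sym2 V) := {e | e ∈ Sg.edges}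

/-- The final graph after deleting the segment and a vertex `v`. -/
def FG {p q : V} (Sg : G.Walk p q) (v : ↥(FV (G := G) Sg)) :
    SimpleGraph {w : ↥(FV (G := G) Sg) // w ∈ {w | w ≠ v}} :=
  ((G.deleteEdges (ES Sg)).induce (FV Sg)).induce {w | w ≠ v}

/-- Reachability in the final graph, on raw vertices. -/
def FR {p q : V} (Sg : G.Walk p q) (v : ↥(FV (G := G) Sg)) (x y : V) : Prop :=
  ∃ (hx : x ∈ FV Sg) (hy : y ∈ FV Sg)
    (hx2 : (⟨x, hx⟩ : ↥(FV (G := G) Sg)) ∈ {w | w ≠ v})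
    (hy2 : (⟨y, hy⟩ : ↥(FV (G := G) Sg)) ∈ {w | w ≠ v}),
    (FG Sg v).Reachable ⟨⟨x, hx⟩, hx2⟩ ⟨⟨y, hy⟩, hy2⟩

variable {p q : V} {Sg : G.Walk p q} {v : ↥(FV (G := G) Sg)}

lemma FR.refl (hx : x ∈ FV Sg) (hxv : x ≠ ↑↑v) : FR Sg v x x :=
  ⟨hx, hx, fun h => hxv (congrArg Subtype.val h), fun h => hxv (congrArg Subtype.val h),
    Reachable.refl _⟩

lemma FR.symm (h : FR Sg v x y) : FR Sg v y x := by
  obtain ⟨hx, hy, hx2, hy2, r⟩ := h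
  exact ⟨hy, hx, hy2, hx2, r.symm⟩

lemma FR.trans (h : FR Sg v x y) (h' : FR Sg v y z) : FR Sg v x z := by
  obtain ⟨hx, hy, hx2, hy2, r⟩ := h
  obtain ⟨hy', hz, hy2', hz2, r'⟩ := h'
  refine ⟨hx, hz, hx2, hz2, r.trans ?_⟩
  have : (⟨⟨y, hy⟩, hy2⟩ : {w : ↥(FV (G := G) Sg) // w ∈ {w | w ≠ v}})
      = ⟨⟨y, hy'⟩, hy2'⟩ := Subtype.ext (Subtype.ext rfl)
  rw [this]; exact r'

lemma FR.step (hx : x ∈ FV Sg) (hy : y ∈ FV Sg) (hxv : x ≠ ↑↑v) (hyv : y ≠ ↑↑v)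
    (hadj : G.Adj x y) (he : s(x, y) ∉ Sg.edges) : FR Sg v x y := by
  refine ⟨hx, hy, fun h => hxv (congrArg Subtype.val h),
    fun h => hyv (congrArg Subtype.val h), Adj.reachable ?_⟩
  show (G.deleteEdges (ES Sg)).Adj x y
  simp only [deleteEdges_adj]
  exact ⟨hadj, he⟩

lemma FR.ne_v (h : FR Sg v x y) : x ≠ ↑↑v := by
  obtain ⟨hx, _, hx2, _, _⟩ := h
  exact fun hh => hx2 (Subtype.ext hh)

lemma FR.mem (h : FR Sg v x y) : x ∈ FV Sg := h.1

/-- Transfer a walk avoiding everything into an `FR` statement. -/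
lemma FR.ofWalk {x y : V} (W : G.Walk x y)
    (hsup : ∀ u ∈ W.support, u ∈ FV Sg ∧ u ≠ ↑↑v)
    (hed : ∀ e ∈ W.edges, e ∉ Sg.edges) : FR Sg v x y := by
  induction W with
  | nil =>
    obtain ⟨h1, h2⟩ := hsup _ (Walk.start_mem_support _)
    exact FR.refl h1 h2
  | cons h W ih =>
    rename_i a b c
    obtain ⟨h1, h2⟩ := hsup a (by simp)
    obtain ⟨h3, h4⟩ := hsup b
      (by rw [Walk.support_cons]; exact List.mem_cons_of_mem _ W.start_mem_support)
    refine (FR.step h1 h3 h2 h4 h ?_).trans (ih ?_ ?_)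
    · exact hed _ (by simp)
    · intro u hu
      exact hsup u (by rw [Walk.support_cons]; exact List.mem_cons_of_mem _ hu)
    · intro e he; exact hed e (by simp [he])

section Cyc

variable [DecidableEq V] {o : V} {C : G.Walk o o}

lemma dropLast_support (C : G.Walk o o) :
    C.support.dropLast = (List.range C.length).map C.getVert := by
  rw [support_eq_map, List.range_succ, List.map_append]
  simp

lemma cyc_getVert_inj (hC : C.IsCycle) :
    ∀ i < C.length, ∀ j < C.length, C.getVert i = C.getVert j → i = j := by
  have htail : C.support.tail = (List.range C.length).map (C.getVert ∘ Nat.succ) := by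
    rw [support_eq_map, List.range_succ_eq_map]
    simp
  have hnd := hC.support_nodup
  rw [htail] at hnd
  have hinj1 : ∀ i < C.length, ∀ j < C.length,
      C.getVert (i + 1) = C.getVert (j + 1) → i = j := by
    intro i hi j hj hij
    have hlen : ((List.range C.length).map (C.getVert ∘ Nat.succ)).length = C.length := by simp
    refine (List.Nodup.getElem_inj_iff hnd (hi := by omega) (hj := by omega)).mp ?_
    simpa using hij
  have h0 : C.getVert 0 = C.getVert C.length := by
    rw [Walk.getVert_zero, Walk.getVert_length]
  have hn3 : 3 ≤ C.length := hC.three_le_length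
  intro i hi j hj hij
  rcases Nat.eq_zero_or_pos i with rfl | hi0
  · rcases Nat.eq_zero_or_pos j with rfl | hj0
    · rfl
    · -- getVert 0 = getVert j, j ≥ 1 : then getVert length = getVert j
      exfalso
      obtain ⟨j', rfl⟩ := Nat.exists_eq_add_of_lt hj0
      rw [Nat.zero_add] at *
      have : C.getVert ((C.length - 1) + 1) = C.getVert (j' + 1) := by
        have : C.length - 1 + 1 = C.length := by omega
        rw [this, ← h0, hij]
      have := hinj1 _ (by omega) _ (by omega) this
      omega
  · rcases Nat.eq_zero_or_pos j with rfl | hj0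
    · exfalso
      obtain ⟨i', rfl⟩ := Nat.exists_eq_add_of_lt hi0
      rw [Nat.zero_add] at *
      have : C.getVert (i' + 1) = C.getVert ((C.length - 1) + 1) := by
        have h2 : C.length - 1 + 1 = C.length := by omega
        rw [h2, ← h0, hij]
      have := hinj1 _ (by omega) _ (by omega) this
      omega
    · obtain ⟨i', rfl⟩ := Nat.exists_eq_add_of_lt hi0
      obtain ⟨j', rfl⟩ := Nat.exists_eq_add_of_lt hj0
      simp only [Nat.zero_add] at hij hi hj
      have := hinj1 i' (by omega) j' (by omega) hij
      omega

lemma dropLast_nodup (hC : C.IsCycle) : C.support.dropLast.Nodup := by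
  rw [dropLast_support]
  refine List.Nodup.map_on ?_ List.nodup_range
  intro i hi j hj hij
  exact cyc_getVert_inj hC i (List.mem_range.mp hi) j (List.mem_range.mp hj) hij

lemma mem_support_iff' (hC : C.IsCycle) {x : V} :
    x ∈ C.support ↔ ∃ i < C.length, C.getVert i = x := by
  rw [Walk.mem_support_iff_exists_getVert]
  constructor
  · rintro ⟨i, rfl, hi⟩
    rcases Nat.lt_or_ge i C.length with h | h
    · exact ⟨i, h, rfl⟩
    · refine ⟨0, by have := hC.three_le_length; omega, ?_⟩
      rw [Walk.getVert_zero, C.getVert_of_length_le h]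
  · rintro ⟨i, hi, rfl⟩
    exact ⟨i, rfl, hi.le⟩

lemma mem_dropLast_iff (hC : C.IsCycle) {x : V} :
    x ∈ C.support.dropLast ↔ x ∈ C.support := by
  rw [dropLast_support, List.mem_map, mem_support_iff' hC]
  constructor
  · rintro ⟨i, hi, rfl⟩; exact ⟨i, List.mem_range.mp hi, rfl⟩
  · rintro ⟨i, hi, rfl⟩; exact ⟨i, List.mem_range.mpr hi, rfl⟩

lemma cidx_getVert (hC : C.IsCycle) {i : ℕ} (hi : i < C.length) :
    cidx C (C.getVert i) = i := by
  have hnd : ((List.range C.length).map C.getVert).Nodup := by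
    rw [← dropLast_support]; exact dropLast_nodup hC
  have hlen : i < ((List.range C.length).map C.getVert).length := by simpa
  have h1 : ((List.range C.length).map C.getVert)[i]'hlen = C.getVert i := by simp
  unfold cidx
  rw [dropLast_support]
  conv_lhs => rw [← h1]
  exact List.Nodup.idxOf_getElem hnd i hlen

lemma cidx_lt (hC : C.IsCycle) {x : V} (hx : x ∈ C.support) :
    cidx C x < C.length := by
  have : x ∈ C.support.dropLast := (mem_dropLast_iff hC).mpr hx
  have := List.idxOf_lt_length_iff.mpr this
  simpa [cidx, dropLast_support] using this

lemma cidx_inj (hC : C.IsCycle) {x y : V} (hx : x ∈ C.support) (hy : y ∈ C.support)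
    (h : cidx C x = cidx C y) : x = y :=
  (List.idxOf_inj ((mem_dropLast_iff hC).mpr hx)).mp h

lemma getVert_cidx (hC : C.IsCycle) {x : V} (hx : x ∈ C.support) :
    C.getVert (cidx C x) = x := by
  refine cidx_inj hC ((mem_support_iff' hC).mpr ⟨_, cidx_lt hC hx, rfl⟩) hx ?_
  exact cidx_getVert hC (cidx_lt hC hx)

lemma cyc_adj (hC : C.IsCycle) {i : ℕ} (hi : i < C.length) :
    G.Adj (C.getVert i) (C.getVert ((i + 1) % C.length)) := by
  rcases Nat.lt_or_ge (i + 1) C.length with h | h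
  · rw [Nat.mod_eq_of_lt h]
    exact C.adj_getVert_succ hi
  · have h2 := C.adj_getVert_succ hi
    have hi1 : i + 1 = C.length := by omega
    rw [hi1, Walk.getVert_length] at h2
    have h0 : (i + 1) % C.length = 0 := by rw [hi1, Nat.mod_self]
    rw [h0, Walk.getVert_zero]
    exact h2

lemma cyc_edge_mem (hC : C.IsCycle) {i : ℕ} (hi : i < C.length) :
    s(C.getVert i, C.getVert ((i + 1) % C.length)) ∈ C.edges := by
  rcases Nat.lt_or_ge (i + 1) C.length with h | h
  · rw [Nat.mod_eq_of_lt h]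
    exact edge_consec C hi
  · have hi1 : i + 1 = C.length := by omega
    have h0 : (i + 1) % C.length = 0 := by rw [hi1, Nat.mod_self]
    have := edge_consec C hi
    rw [hi1, Walk.getVert_length, h0, Walk.getVert_zero] at *
    exact this

lemma cyc_edge_eq (hC : C.IsCycle) {e : Sym2 V} (he : e ∈ C.edges) :
    ∃ i < C.length, e = s(C.getVert i, C.getVert ((i + 1) % C.length)) := by
  obtain ⟨i, hi, rfl⟩ := edges_eq_consec C he
  refine ⟨i, hi, ?_⟩
  rcases Nat.lt_or_ge (i + 1) C.length with h | h
  · rw [Nat.mod_eq_of_lt h]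
  · have hi1 : i + 1 = C.length := by omega
    have h0 : (i + 1) % C.length = 0 := by rw [hi1, Nat.mod_self]
    rw [h0, hi1, Walk.getVert_length, Walk.getVert_zero]

end Cyc

lemma mem_support_of_mem_edges' {u w x : V} (W : G.Walk u w) {e : Sym2 V}
    (he : e ∈ W.edges) (hx : x ∈ e) : x ∈ W.support := by
  obtain ⟨i, hi, rfl⟩ := edges_eq_consec W he
  rcases Sym2.mem_iff.mp hx with rfl | rfl
  · exact getVert_mem_support W i
  · exact getVert_mem_support W (i + 1)

lemma walk_avoiding (hG2 : ∀ z : V, (G.induce {w | w ≠ z}).Connected)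
    (vv x w : V) (hx : x ≠ vv) (hw : w ≠ vv) :
    ∃ W : G.Walk x w, ∀ u ∈ W.support, u ≠ vv := by
  obtain ⟨W'⟩ := (hG2 vv).preconnected ⟨x, hx⟩ ⟨w, hw⟩
  refine ⟨W'.map (outHom _), ?_⟩
  intro u hu
  obtain ⟨⟨u', hu'⟩, _, rfl⟩ := List.mem_map.mp
    (show u ∈ W'.support.map (outHom (G := G) {w | w ≠ vv}) by
      rw [← Walk.support_map]; exact hu)
  exact hu'

lemma exists_third (hcard : 3 ≤ Nat.card V) (x w : V) : ∃ z : V, z ≠ x ∧ z ≠ w := by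
  classical
  by_contra hcon
  push_neg at hcon
  have hinj : Function.Injective (fun z : V => if z = x then (0 : Fin 2) else 1) := by
    intro a b hab
    change (if a = x then (0 : Fin 2) else 1) = (if b = x then (0 : Fin 2) else 1) at hab
    by_cases ha : a = x <;> by_cases hb : b = x
    · rw [ha, hb]
    · exfalso; rw [if_pos ha, if_neg hb] at hab; exact absurd hab (by decide)
    · exfalso; rw [if_neg ha, if_pos hb] at hab; exact absurd hab (by decide)
    · rw [hcon a ha, hcon b hb]
  have := Nat.card_le_card_of_injective _ hinj
  simp [Nat.card_eq_fintype_card] at this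
  omega

section Clasp

variable [DecidableEq V] {o : V} {C : G.Walk o o}

lemma claspAux : ∀ {x w : V} (W : G.Walk x w), w ∈ C.support →
    ∀ (hx : x ∉ C.support),
    ∃ z, isClasp C ((earGraph C).connectedComponentMk ⟨x, hx⟩) z := by
  intro x w W
  induction W with
  | nil => intro hw hx; exact absurd hw hx
  | cons h W ih =>
    rename_i a b c
    intro hw hx
    by_cases hb : b ∈ C.support
    · exact ⟨b, hb, ⟨a, hx⟩, rfl, h.symm⟩
    · obtain ⟨z, hz⟩ := ih hw hb
      refine ⟨z, ?_⟩
      have hcomp : (earGraph C).connectedComponentMk ⟨a, hx⟩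
          = (earGraph C).connectedComponentMk ⟨b, hb⟩ :=
        ConnectedComponent.sound (Adj.reachable (by exact h))
      rw [hcomp]
      exact hz

lemma claspNonempty (hcard : 3 ≤ Nat.card V)
    (hG2 : ∀ z : V, (G.induce {w | w ≠ z}).Connected)
    (K : (earGraph C).ConnectedComponent) :
    ∃ z, isClasp C K z := by
  obtain ⟨y, hy⟩ := Quot.exists_rep K
  obtain ⟨z0, hz0⟩ := exists_third hcard (↑y : V) o
  obtain ⟨W, hW⟩ := walk_avoiding hG2 z0 (↑y) o (Ne.symm hz0.1) (Ne.symm hz0.2)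
  obtain ⟨z, hz⟩ := claspAux W C.start_mem_support y.prop
  refine ⟨z, ?_⟩
  have : (⟨↑y, y.prop⟩ : ↥(cycOutside C)) = y := Subtype.ext rfl
  rw [this] at hz
  rw [← hy]
  exact hz

variable {K : (earGraph C).ConnectedComponent}


lemma firstClasp_exists (hC : C.IsCycle) (hne : ∃ z, isClasp C K z) :
    ∃ x, isClasp C K x ∧ cidx C x = firstClasp C K := by
  obtain ⟨z, hz⟩ := hne
  have hne' : {n | ∃ x, isClasp C K x ∧ cidx C x = n}.Nonempty := ⟨cidx C z, z, hz, rfl⟩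
  exact Nat.sInf_mem hne'

lemma lastClasp_exists (hC : C.IsCycle) (hne : ∃ z, isClasp C K z) :
    ∃ x, isClasp C K x ∧ cidx C x = lastClasp C K := by
  obtain ⟨z, hz⟩ := hne
  have hne' : {n | ∃ x, isClasp C K x ∧ cidx C x = n}.Nonempty := ⟨cidx C z, z, hz, rfl⟩
  refine Nat.sSup_mem hne' ?_
  refine ⟨C.length, ?_⟩
  rintro m ⟨x, hx, rfl⟩
  exact (cidx_lt hC hx.1).le

lemma firstClasp_le {x : V} (hx : isClasp C K x) : firstClasp C K ≤ cidx C x :=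
  Nat.sInf_le ⟨x, hx, rfl⟩

lemma le_lastClasp (hC : C.IsCycle) {x : V} (hx : isClasp C K x) :
    cidx C x ≤ lastClasp C K := by
  refine le_csSup ?_ ⟨x, hx, rfl⟩
  refine ⟨C.length, ?_⟩
  rintro m ⟨y, hy, rfl⟩
  exact (cidx_lt hC hy.1).le

lemma lastClasp_lt (hC : C.IsCycle) (hne : ∃ z, isClasp C K z) :
    lastClasp C K < C.length := by
  obtain ⟨x, hx, he⟩ := lastClasp_exists hC hne
  rw [← he]
  exact cidx_lt hC hx.1

/-- A walk between two clasps of the same earring, internally outside `C`. -/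
lemma claspWalk {x z : V} (hx : isClasp C K x) (hz : isClasp C K z) :
    ∃ W : G.Walk x z, (∀ u ∈ W.support, u = x ∨ u = z ∨ u ∉ C.support) ∧
      (∀ e ∈ W.edges, ∃ u, u ∉ C.support ∧ u ∈ e) := by
  obtain ⟨hxC, y₁, hk1, hadj1⟩ := hx
  obtain ⟨hzC, y₂, hk2, hadj2⟩ := hz
  have hreach : (earGraph C).Reachable y₁ y₂ :=
    ConnectedComponent.exact (hk1.trans hk2.symm)
  obtain ⟨Wm'⟩ := hreach
  set Wm : G.Walk ↑y₁ ↑y₂ := Wm'.map (outHom _) with hWm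
  have hWmsup : ∀ u ∈ Wm.support, u ∉ C.support := by
    intro u hu
    rw [hWm] at hu
    obtain ⟨⟨u', hu'⟩, _, rfl⟩ := List.mem_map.mp
      (show u ∈ (Wm' : (G.induce (cycOutside C)).Walk y₁ y₂).support.map
          (outHom (G := G) (cycOutside C)) by
        exact cast (congrArg (fun l => u ∈ l) (Walk.support_map (outHom (G := G) (cycOutside C))
          (Wm' : (G.induce (cycOutside C)).Walk y₁ y₂))) hu)
    exact hu'
  refine ⟨Walk.cons hadj1 (Wm.append (Walk.cons hadj2.symm Walk.nil)), ?_, ?_⟩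
  · intro u hu
    rw [Walk.support_cons, List.mem_cons] at hu
    rcases hu with rfl | hu
    · exact Or.inl rfl
    · rw [Walk.support_append, List.mem_append] at hu
      rcases hu with hu | hu
      · exact Or.inr (Or.inr (hWmsup _ hu))
      · rw [Walk.support_cons, List.tail_cons, Walk.support_nil] at hu
        rcases List.mem_singleton.mp hu with rfl
        exact Or.inr (Or.inl rfl)
  · intro e he
    rw [Walk.edges_cons, List.mem_cons] at he
    rcases he with rfl | he
    · exact ⟨↑y₁, y₁.prop, Sym2.mem_mk_right _ _⟩
    · rw [Walk.edges_append, List.mem_append] at he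
      rcases he with he | he
      · obtain ⟨i, hi, rfl⟩ := edges_eq_consec Wm he
        exact ⟨Wm.getVert i, hWmsup _ (getVert_mem_support Wm i), Sym2.mem_mk_left _ _⟩
      · rw [Walk.edges_cons, Walk.edges_nil] at he
        rcases List.mem_singleton.mp he with rfl
        exact ⟨↑y₂, y₂.prop, Sym2.mem_mk_left _ _⟩

end Clasp

section Main

variable [DecidableEq V] {o : V} {C : G.Walk o o} {p q : V} {Sg : G.Walk p q}
  {v : ↥(FV (G := G) Sg)}

lemma edge_not_in_Sg (hSgC : ∀ u ∈ Sg.support, u ∈ C.support) {x u : V}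
    (hx : x ∉ C.support) : s(x, u) ∉ Sg.edges := fun he =>
  hx (hSgC _ (mem_support_of_mem_edges' Sg he (Sym2.mem_mk_left _ _)))

lemma outside_mem_FV (hSgC : ∀ u ∈ Sg.support, u ∈ C.support) {x : V}
    (hx : x ∉ C.support) : x ∈ FV Sg := Or.inl (fun h => hx (hSgC _ h))

lemma FRdetour (hSgC : ∀ u ∈ Sg.support, u ∈ C.support) (hvC : (↑↑v : V) ∈ C.support)
    {K : (earGraph C).ConnectedComponent} {x z : V}
    (hx : isClasp C K x) (hz : isClasp C K z) (hxF : x ∈ FV Sg) (hzF : z ∈ FV Sg)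
    (hxv : x ≠ ↑↑v) (hzv : z ≠ ↑↑v) : FR Sg v x z := by
  obtain ⟨W, hsup, hed⟩ := claspWalk hx hz
  refine FR.ofWalk W ?_ ?_
  · intro u hu
    rcases hsup u hu with rfl | rfl | hout
    · exact ⟨hxF, hxv⟩
    · exact ⟨hzF, hzv⟩
    · exact ⟨outside_mem_FV hSgC hout, fun h => hout (h ▸ hvC)⟩
  · intro e he hin
    obtain ⟨u, huo, hue⟩ := hed e he
    exact huo (hSgC _ (mem_support_of_mem_edges' Sg hin hue))

lemma reachAux (hSgC : ∀ u ∈ Sg.support, u ∈ C.support)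
    (hAF : ∀ z, isAnchor C z → z ∈ FV Sg) :
    ∀ {x w : V} (W : G.Walk x w), w ∈ C.support → (∀ u ∈ W.support, u ≠ ↑↑v) →
    x ∉ C.support →
    ∃ z, z ∈ C.support ∧ isAnchor C z ∧ z ≠ (↑↑v : V) ∧ FR Sg v x z := by
  intro x w W
  induction W with
  | nil => intro hw _ hx; exact absurd hw hx
  | cons h W ih =>
    rename_i a b c
    intro hw hav hx
    have hane : a ≠ ↑↑v := hav a (by simp)
    have hbmem : b ∈ (Walk.cons h W).support := by
      rw [Walk.support_cons]; exact List.mem_cons_of_mem _ W.start_mem_support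
    by_cases hb : b ∈ C.support
    · have hcl : isClasp C ((earGraph C).connectedComponentMk ⟨a, hx⟩) b :=
        ⟨hb, ⟨a, hx⟩, rfl, h.symm⟩
      have hanch : isAnchor C b := ⟨_, hcl⟩
      refine ⟨b, hb, hanch, hav b hbmem, ?_⟩
      exact FR.step (outside_mem_FV hSgC hx) (hAF b hanch) hane (hav b hbmem) h
        (edge_not_in_Sg hSgC hx)
    · obtain ⟨z, hz1, hz2, hz3, hz4⟩ := ih hw
        (fun u hu => hav u (by rw [Walk.support_cons]; exact List.mem_cons_of_mem _ hu)) hb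
      refine ⟨z, hz1, hz2, hz3, FR.trans ?_ hz4⟩
      exact FR.step (outside_mem_FV hSgC hx) (outside_mem_FV hSgC hb) hane
        (hav b hbmem) h (edge_not_in_Sg hSgC hx)

lemma reachToCore (hSgC : ∀ u ∈ Sg.support, u ∈ C.support)
    (hAF : ∀ z, isAnchor C z → z ∈ FV Sg)
    (hG2 : ∀ z : V, (G.induce {w | w ≠ z}).Connected)
    {w : V} (hw : w ∈ C.support) (hwv : w ≠ ↑↑v)
    {x : V} (hx : x ∉ C.support) (hxv : x ≠ ↑↑v) :
    ∃ z, z ∈ C.support ∧ isAnchor C z ∧ z ≠ (↑↑v : V) ∧ FR Sg v x z := by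
  obtain ⟨W, hW⟩ := walk_avoiding hG2 (↑↑v) x w hxv hwv
  exact reachAux hSgC hAF W hw hW hx

lemma succ_mod_inj {n x y : ℕ} (hx : x < n) (hy : y < n)
    (h : (x + 1) % n = (y + 1) % n) : x = y := by
  rcases Nat.lt_or_ge (x + 1) n with h1 | h1 <;> rcases Nat.lt_or_ge (y + 1) n with h2 | h2
  · rw [Nat.mod_eq_of_lt h1, Nat.mod_eq_of_lt h2] at h; omega
  · have hy1 : y + 1 = n := by omega
    rw [Nat.mod_eq_of_lt h1, hy1, Nat.mod_self] at h; omega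
  · have hx1 : x + 1 = n := by omega
    rw [hx1, Nat.mod_self, Nat.mod_eq_of_lt h2] at h; omega
  · omega

lemma Sg_len_pos (hpq : p ≠ q) : 0 < Sg.length := by
  rcases Nat.eq_zero_or_pos Sg.length with h0 | h
  · exfalso
    have h1 := Sg.getVert_length
    rw [h0, Walk.getVert_zero] at h1
    exact hpq h1
  · exact h

lemma Sg_support_sub (hsub : ∀ e ∈ Sg.edges, e ∈ C.edges) (hlen : 0 < Sg.length) :
    ∀ u ∈ Sg.support, u ∈ C.support := by
  intro u hu
  rw [Walk.mem_support_iff_exists_getVert] at hu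
  obtain ⟨j, rfl, hj⟩ := hu
  rcases Nat.lt_or_ge j Sg.length with h | h
  · have he := edge_consec Sg h
    exact mem_support_of_mem_edges' C (hsub _ he) (Sym2.mem_mk_left _ _)
  · have hj' : j = Sg.length := le_antisymm hj h
    have he := edge_consec Sg (Nat.sub_lt hlen Nat.one_pos)
    have h2 : Sg.length - 1 + 1 = Sg.length := by omega
    rw [h2] at he
    rw [hj']
    exact mem_support_of_mem_edges' C (hsub _ he) (Sym2.mem_mk_right _ _)

/-- Each step of the segment moves the index by ±1 mod n. -/
lemma Sg_step (hC : C.IsCycle) (hsub : ∀ e ∈ Sg.edges, e ∈ C.edges)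
    {j : ℕ} (hj : j < Sg.length) :
    cidx C (Sg.getVert (j + 1)) = (cidx C (Sg.getVert j) + 1) % C.length ∨
    cidx C (Sg.getVert j) = (cidx C (Sg.getVert (j + 1)) + 1) % C.length := by
  have he := hsub _ (edge_consec Sg hj)
  obtain ⟨i, hi, hei⟩ := cyc_edge_eq hC he
  have hn : 0 < C.length := by have := hC.three_le_length; omega
  rcases Sym2.eq_iff.mp hei with ⟨h1, h2⟩ | ⟨h1, h2⟩
  · left
    rw [h1, h2, cidx_getVert hC hi, cidx_getVert hC (Nat.mod_lt _ hn)]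
  · right
    rw [h1, h2, cidx_getVert hC hi, cidx_getVert hC (Nat.mod_lt _ hn)]

/-- Direction dichotomy for the segment. -/
lemma Sg_dir (hC : C.IsCycle) (hSgP : Sg.IsPath) (hsub : ∀ e ∈ Sg.edges, e ∈ C.edges)
    (hlen : 0 < Sg.length) :
    (∀ j < Sg.length, cidx C (Sg.getVert (j + 1)) = (cidx C (Sg.getVert j) + 1) % C.length) ∨
    (∀ j < Sg.length, cidx C (Sg.getVert j) = (cidx C (Sg.getVert (j + 1)) + 1) % C.length) := by
  have hSgC := Sg_support_sub hsub hlen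
  have hmem : ∀ j, j ≤ Sg.length → Sg.getVert j ∈ C.support := fun j hj =>
    hSgC _ (Walk.mem_support_iff_exists_getVert.mpr ⟨j, rfl, hj⟩)
  have hlt : ∀ j, j ≤ Sg.length → cidx C (Sg.getVert j) < C.length := fun j hj =>
    cidx_lt hC (hmem j hj)
  -- no two consecutive steps can have opposite directions
  have hkey : ∀ j, j + 1 < Sg.length →
      (cidx C (Sg.getVert (j + 1)) = (cidx C (Sg.getVert j) + 1) % C.length →
        cidx C (Sg.getVert (j + 2)) = (cidx C (Sg.getVert (j + 1)) + 1) % C.length) := by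
    intro j hj hplus
    rcases Sg_step (Sg := Sg) hC hsub (by omega : j + 1 < Sg.length) with h | h
    · exact h
    · exfalso
      -- h : idx (j+1) = (idx (j+2) + 1) % n ; hplus : idx (j+1) = (idx j + 1) % n
      have heq : (cidx C (Sg.getVert (j + 2)) + 1) % C.length
          = (cidx C (Sg.getVert j) + 1) % C.length := by rw [← h, hplus]
      have := succ_mod_inj (hlt (j + 2) (by omega)) (hlt j (by omega)) heq
      have hveq : Sg.getVert (j + 2) = Sg.getVert j :=
        cidx_inj hC (hmem _ (by omega)) (hmem _ (by omega)) this
      have := path_getVert_inj hSgP (by omega : j + 2 ≤ Sg.length) (by omega) hveq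
      omega
  have hkey2 : ∀ j, j + 1 < Sg.length →
      (cidx C (Sg.getVert j) = (cidx C (Sg.getVert (j + 1)) + 1) % C.length →
        cidx C (Sg.getVert (j + 1)) = (cidx C (Sg.getVert (j + 2)) + 1) % C.length) := by
    intro j hj hminus
    rcases Sg_step (Sg := Sg) hC hsub (by omega : j + 1 < Sg.length) with h | h
    · exfalso
      -- h : idx (j+2) = (idx (j+1) + 1) % n ; hminus : idx j = (idx (j+1) + 1) % n
      have hveq : Sg.getVert (j + 2) = Sg.getVert j :=
        cidx_inj hC (hmem _ (by omega)) (hmem _ (by omega)) (by rw [h, hminus])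
      have := path_getVert_inj hSgP (by omega : j + 2 ≤ Sg.length) (by omega) hveq
      omega
    · exact h
  rcases Sg_step (Sg := Sg) hC hsub hlen with h0 | h0
  · left
    intro j hj
    induction j with
    | zero => exact h0
    | succ i ih => exact hkey i hj (ih (by omega))
  · right
    intro j hj
    induction j with
    | zero => exact h0
    | succ i ih => exact hkey2 i hj (ih (by omega))

/-- Index formula along the segment, in the increasing direction. -/
lemma Sg_idx (hC : C.IsCycle)
    (hdir : ∀ j < Sg.length, cidx C (Sg.getVert (j + 1))
      = (cidx C (Sg.getVert j) + 1) % C.length)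
    (hpC : p ∈ C.support) :
    ∀ j ≤ Sg.length, cidx C (Sg.getVert j) = (cidx C p + j) % C.length := by
  intro j hj
  induction j with
  | zero =>
    rw [Walk.getVert_zero, Nat.add_zero, Nat.mod_eq_of_lt (cidx_lt hC hpC)]
  | succ i ih =>
    rw [hdir i (by omega), ih (by omega), Nat.mod_add_mod, ← Nat.add_assoc]

lemma chainFR (v : ↥(FV (G := G) Sg)) (c : ℕ → V) (kmax : ℕ)
    (hcFV : ∀ k, k ≤ kmax → c k ∈ FV Sg)
    (hstep : ∀ k, k < kmax → G.Adj (c k) (c (k + 1)) ∧ s(c k, c (k + 1)) ∉ Sg.edges) :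
    ∀ k k', k ≤ k' → k' ≤ kmax → (∀ m, k ≤ m → m ≤ k' → c m ≠ ↑↑v) →
      FR Sg v (c k) (c k') := by
  have hchain : ∀ d k, k + d ≤ kmax → (∀ m, k ≤ m → m ≤ k + d → c m ≠ ↑↑v) →
      FR Sg v (c k) (c (k + d)) := by
    intro d
    induction d with
    | zero => intro k h1 h2; exact FR.refl (hcFV k (by omega)) (h2 k le_rfl (by omega))
    | succ e ih =>
      intro k h1 h2
      refine (ih k (by omega) (fun m hm1 hm2 => h2 m hm1 (by omega))).trans ?_
      have hst := hstep (k + e) (by omega)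
      exact FR.step (hcFV _ (by omega)) (hcFV _ (by omega))
        (h2 _ (by omega) (by omega)) (h2 _ (by omega) (by omega)) hst.1 hst.2
  intro k k' hkk hk' hm
  have := hchain (k' - k) k (by omega) (fun m h1 h2 => hm m h1 (by omega))
  rwa [show k + (k' - k) = k' by omega] at this

/-- Abstract assembly: given a chain covering the core, conclude connectivity. -/
lemma assemble (hpq : p ≠ q)
    (hG2 : ∀ z : V, (G.induce {w | w ≠ z}).Connected)
    (hSgC : ∀ u ∈ Sg.support, u ∈ C.support)
    (hAF : ∀ z, isAnchor C z → z ∈ FV Sg)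
    (c : ℕ → V) (kmax : ℕ) (hkpos : 0 < kmax)
    (hc0 : c 0 = q) (hck : c kmax = p)
    (hcmem : ∀ k, k ≤ kmax → c k ∈ C.support)
    (hcFV : ∀ k, k ≤ kmax → c k ∈ FV Sg)
    (hcinj : ∀ k, k ≤ kmax → ∀ k', k' ≤ kmax → c k = c k' → k = k')
    (hstep : ∀ k, k < kmax → G.Adj (c k) (c (k + 1)) ∧ s(c k, c (k + 1)) ∉ Sg.edges)
    (hcover : ∀ z, z ∈ C.support → z ∈ FV Sg → ∃ k, k ≤ kmax ∧ z = c k)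
    (hqp : ∀ (v : ↥(FV (G := G) Sg)) (kv : ℕ), 0 < kv → kv < kmax →
      (↑↑v : V) = c kv → FR Sg v q p) :
    ∀ v : ↥(FV (G := G) Sg),
      (((G.deleteEdges (ES Sg)).induce (FV Sg)).induce {w | w ≠ v}).Connected := by
  intro v
  have hchain' := chainFR v c kmax hcFV hstep
  have hpair : ∀ k, k ≤ kmax → ∀ k', k' ≤ kmax → c k ≠ ↑↑v → c k' ≠ ↑↑v →
      FR Sg v (c k) (c k') := by
    have hwl : ∀ k k', k ≤ k' → k' ≤ kmax → c k ≠ ↑↑v → c k' ≠ ↑↑v →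
        FR Sg v (c k) (c k') := by
      intro k k' hkk hk' h1 h2
      by_cases hmid : ∀ m, k ≤ m → m ≤ k' → c m ≠ ↑↑v
      · exact hchain' k k' hkk hk' hmid
      · push_neg at hmid
        obtain ⟨kv, hkv1, hkv2, hkv3⟩ := hmid
        have hkne : k ≠ kv := fun h => h1 (h ▸ hkv3)
        have hkne' : k' ≠ kv := fun h => h2 (h ▸ hkv3)
        have hne : ∀ m, m ≤ kmax → m ≠ kv → c m ≠ ↑↑v := by
          intro m hm hmk h
          exact hmk (hcinj m hm kv (by omega) (h.trans hkv3.symm))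
        have hq' : FR Sg v q p := hqp v kv (by omega) (by omega) hkv3.symm
        have hc1 : FR Sg v (c 0) (c k) :=
          hchain' 0 k (by omega) (by omega) (fun m hm1 hm2 => hne m (by omega) (by omega))
        have hc2 : FR Sg v (c k') (c kmax) :=
          hchain' k' kmax (by omega) le_rfl (fun m hm1 hm2 => hne m (by omega) (by omega))
        rw [hc0] at hc1
        rw [hck] at hc2
        exact (hc1.symm.trans hq').trans hc2.symm
    intro k hk k' hk' h1 h2
    rcases le_total k k' with h | h
    · exact hwl k k' h hk' h1 h2
    · exact (hwl k' k h hk h2 h1).symm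
  have hrc : ∀ x, x ∈ FV Sg → x ≠ ↑↑v → ∃ k, k ≤ kmax ∧ c k ≠ ↑↑v ∧ FR Sg v x (c k) := by
    intro x hx hxv
    by_cases hxC : x ∈ C.support
    · obtain ⟨k, hk, rfl⟩ := hcover x hxC hx
      exact ⟨k, hk, hxv, FR.refl hx hxv⟩
    · have hexw : ∃ w, w ∈ C.support ∧ w ≠ (↑↑v : V) := by
        by_cases hqv : q = ↑↑v
        · refine ⟨p, hck ▸ hcmem kmax le_rfl, ?_⟩
          intro hpv
          exact hpq (hpv.trans hqv.symm)
        · exact ⟨q, hc0 ▸ hcmem 0 (by omega), hqv⟩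
      obtain ⟨w, hw, hwv⟩ := hexw
      obtain ⟨z, hz1, hz2, hz3, hz4⟩ := reachToCore hSgC hAF hG2 hw hwv hxC hxv
      obtain ⟨k, hk, rfl⟩ := hcover z hz1 (hAF z hz2)
      exact ⟨k, hk, hz3, hz4⟩
  have hprec : (((G.deleteEdges (ES Sg)).induce (FV Sg)).induce {w | w ≠ v}).Preconnected := by
    intro uu ww
    obtain ⟨k, hk, hkv, hfr1⟩ := hrc (↑↑uu) uu.1.2 (fun h => uu.2 (Subtype.ext h))
    obtain ⟨k', hk', hkv', hfr2⟩ := hrc (↑↑ww) ww.1.2 (fun h => ww.2 (Subtype.ext h))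
    have hfr : FR Sg v (↑↑uu) (↑↑ww) :=
      (hfr1.trans (hpair k hk k' hk' hkv hkv')).trans hfr2.symm
    obtain ⟨h1, h2, h3, h4, r⟩ := hfr
    have e1 : uu = ⟨⟨↑↑uu, h1⟩, h3⟩ := Subtype.ext (Subtype.ext rfl)
    have e2 : ww = ⟨⟨↑↑ww, h2⟩, h4⟩ := Subtype.ext (Subtype.ext rfl)
    rw [e1, e2]
    exact r
  have hqFV : q ∈ FV Sg := Or.inr (Or.inr rfl)
  have hpFV : p ∈ FV Sg := Or.inr (Or.inl rfl)
  have hnon : Nonempty {w : ↥(FV (G := G) Sg) // w ∈ {w | w ≠ v}} := by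
    by_cases hqv : (⟨q, hqFV⟩ : ↥(FV (G := G) Sg)) = v
    · refine ⟨⟨⟨p, hpFV⟩, ?_⟩⟩
      intro hpv
      exact hpq (congrArg Subtype.val (hpv.trans hqv.symm))
    · exact ⟨⟨⟨q, hqFV⟩, hqv⟩⟩
  exact @SimpleGraph.Connected.mk _ _ hprec hnon

lemma core (hG : Graph2Conn G) (hC : C.IsCycle)
    (hout : (cycOutside C).Nonempty)
    (H : (earGraph C).ConnectedComponent)
    (hmin : ∀ K, arcLen C H ≤ arcLen C K)
    (hpq : p ≠ q) (hSgP : Sg.IsPath)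
    (hsub : ∀ e ∈ Sg.edges, e ∈ C.edges)
    (hpA : isAnchor C p) (hqA : isAnchor C q)
    (hintA : ∀ x ∈ Sg.support, x ≠ p → x ≠ q → ¬ isAnchor C x)
    (harc : ∀ x ∈ Sg.support, firstClasp C H ≤ cidx C x ∧ cidx C x ≤ lastClasp C H)
    (hdir : ∀ j < Sg.length, cidx C (Sg.getVert (j + 1))
      = (cidx C (Sg.getVert j) + 1) % C.length) :
    Graph2Conn ((G.deleteEdges (ES Sg)).induce (FV Sg)) := by
  classical
  have hn3 : 3 ≤ C.length := hC.three_le_length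
  have hn0 : 0 < C.length := by omega
  have hlen : 0 < Sg.length := Sg_len_pos hpq
  have hSgC : ∀ u ∈ Sg.support, u ∈ C.support := Sg_support_sub hsub hlen
  have hpC : p ∈ C.support := hSgC p Sg.start_mem_support
  have hqC : q ∈ C.support := hSgC q Sg.end_mem_support
  have hsn : cidx C p < C.length := cidx_lt hC hpC
  have hidx : ∀ j ≤ Sg.length, cidx C (Sg.getVert j) = (cidx C p + j) % C.length :=
    Sg_idx hC hdir hpC
  have hlenn : Sg.length < C.length := by
    have hnd := hSgP.support_nodup
    have hsubL : Sg.support ⊆ C.support.dropLast := fun u hu =>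
      (mem_dropLast_iff hC).mpr (hSgC u hu)
    have hsp := List.Subperm.length_le (List.subperm_of_subset hnd hsubL)
    have h1 : Sg.support.length = Sg.length + 1 := Walk.length_support Sg
    have h2 : C.support.dropLast.length = C.length := by
      rw [dropLast_support]; simp
    omega
  have hAF : ∀ z, isAnchor C z → z ∈ FV Sg := by
    intro z hz
    by_cases hzS : z ∈ Sg.support
    · by_cases hzp : z = p
      · exact Or.inr (Or.inl hzp)
      · by_cases hzq : z = q
        · exact Or.inr (Or.inr hzq)
        · exact absurd hz (hintA z hzS hzp hzq)
    · exact Or.inl hzS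
  have hclaspNE : ∀ K : (earGraph C).ConnectedComponent, ∃ z, isClasp C K z :=
    claspNonempty hG.1 hG.2
  obtain ⟨A₀, hA₀c, hA₀i⟩ := firstClasp_exists hC (hclaspNE H)
  obtain ⟨B₀, hB₀c, hB₀i⟩ := lastClasp_exists hC (hclaspNE H)
  have hbn : lastClasp C H < C.length := lastClasp_lt hC (hclaspNE H)
  have has : firstClasp C H ≤ cidx C p := (harc p Sg.start_mem_support).1
  have htb : cidx C q ≤ lastClasp C H := (harc q Sg.end_mem_support).2
  have hcidxq : cidx C q = (cidx C p + Sg.length) % C.length := by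
    have := hidx Sg.length le_rfl
    rwa [Sg.getVert_length] at this
  have hSgv : ∀ j ≤ Sg.length, Sg.getVert j
      = C.getVert ((cidx C p + j) % C.length) := by
    intro j hj
    have h1 : Sg.getVert j ∈ C.support :=
      hSgC _ (Walk.mem_support_iff_exists_getVert.mpr ⟨j, rfl, hj⟩)
    refine cidx_inj hC h1 ((mem_support_iff' hC).mpr
      ⟨_, Nat.mod_lt _ hn0, rfl⟩) ?_
    rw [hidx j hj, cidx_getVert hC (Nat.mod_lt _ hn0)]
  have hSgmem : ∀ x, x ∈ Sg.support ↔ ∃ j ≤ Sg.length, x = Sg.getVert j := by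
    intro x
    rw [Walk.mem_support_iff_exists_getVert]
    constructor
    · rintro ⟨j, rfl, hj⟩; exact ⟨j, hj, rfl⟩
    · rintro ⟨j, hj, rfl⟩; exact ⟨j, rfl, hj⟩
  constructor
  · -- cardinality
    have hfin : Finite V := Nat.finite_of_card_ne_zero (by have := hG.1; omega)
    obtain ⟨y, hy⟩ := hout
    have hyFV : y ∈ FV Sg := Or.inl (fun h => hy (hSgC y h))
    have hpFV : p ∈ FV Sg := Or.inr (Or.inl rfl)
    have hqFV : q ∈ FV Sg := Or.inr (Or.inr rfl)
    haveI := Fintype.ofFinite V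
    haveI : Fintype ↥(FV (G := G) Sg) := Fintype.ofFinite _
    have hyp : y ≠ p := fun h => hy (h ▸ hpC)
    have hyq : y ≠ q := fun h => hy (h ▸ hqC)
    have hcard3 : ({⟨p, hpFV⟩, ⟨q, hqFV⟩, ⟨y, hyFV⟩} : Finset ↥(FV (G := G) Sg)).card
        = 3 := by
      rw [Finset.card_eq_three]
      refine ⟨_, _, _, ?_, ?_, ?_, rfl⟩
      · exact fun h => hpq (congrArg Subtype.val h)
      · exact fun h => hyp (congrArg Subtype.val h).symm
      · exact fun h => hyq (congrArg Subtype.val h).symm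
    have hle := Finset.card_le_univ
      ({⟨p, hpFV⟩, ⟨q, hqFV⟩, ⟨y, hyFV⟩} : Finset ↥(FV (G := G) Sg))
    rw [Nat.card_eq_fintype_card]
    rw [hcard3] at hle
    exact hle
  · rcases Nat.lt_or_ge (cidx C p + Sg.length) C.length with hnw | hw
    · -- non-wrap case
      have ht : cidx C q = cidx C p + Sg.length := by
        rw [hcidxq, Nat.mod_eq_of_lt hnw]
      have hmod : ∀ k, k ≤ C.length - Sg.length →
          (cidx C p + Sg.length + k) % C.length
          = if cidx C p + Sg.length + k < C.length then cidx C p + Sg.length + k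
            else cidx C p + Sg.length + k - C.length := by
        intro k hk
        split_ifs with h
        · exact Nat.mod_eq_of_lt h
        · rw [Nat.mod_eq_sub_mod (by omega)]
          exact Nat.mod_eq_of_lt (by omega)
      have hcinj : ∀ k, k ≤ C.length - Sg.length → ∀ k', k' ≤ C.length - Sg.length →
          C.getVert ((cidx C p + Sg.length + k) % C.length)
            = C.getVert ((cidx C p + Sg.length + k') % C.length) → k = k' := by
        intro k hk k' hk' h
        have e := cyc_getVert_inj hC _ (Nat.mod_lt _ hn0) _ (Nat.mod_lt _ hn0) h
        rw [hmod k hk, hmod k' hk'] at e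
        split_ifs at e <;> omega
      have hc0 : C.getVert ((cidx C p + Sg.length + 0) % C.length) = q := by
        rw [Nat.add_zero, Nat.mod_eq_of_lt hnw]
        refine cidx_inj hC ((mem_support_iff' hC).mpr ⟨_, hnw, rfl⟩) hqC ?_
        rw [cidx_getVert hC hnw, ht]
      have hck : C.getVert ((cidx C p + Sg.length + (C.length - Sg.length))
          % C.length) = p := by
        rw [show cidx C p + Sg.length + (C.length - Sg.length)
          = cidx C p + C.length by omega, Nat.add_mod_right, Nat.mod_eq_of_lt hsn]
        refine cidx_inj hC ((mem_support_iff' hC).mpr ⟨_, hsn, rfl⟩) hpC ?_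
        rw [cidx_getVert hC hsn]
      have hcmem : ∀ k, k ≤ C.length - Sg.length →
          C.getVert ((cidx C p + Sg.length + k) % C.length) ∈ C.support :=
        fun k _ => (mem_support_iff' hC).mpr ⟨_, Nat.mod_lt _ hn0, rfl⟩
      have hcFV : ∀ k, k ≤ C.length - Sg.length →
          C.getVert ((cidx C p + Sg.length + k) % C.length) ∈ FV Sg := by
        intro k hk
        by_cases hzS : C.getVert ((cidx C p + Sg.length + k) % C.length) ∈ Sg.support
        · obtain ⟨j, hj, hje⟩ := (hSgmem _).mp hzS
          have hje' : C.getVert ((cidx C p + Sg.length + k) % C.length)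
              = C.getVert ((cidx C p + j) % C.length) := by rw [hje, hSgv j hj]
          have e := cyc_getVert_inj hC _ (Nat.mod_lt _ hn0) _ (Nat.mod_lt _ hn0) hje'
          rw [hmod k hk, Nat.mod_eq_of_lt (by omega)] at e
          split_ifs at e
          · have hj' : j = Sg.length := by omega
            rw [hj', Sg.getVert_length] at hje
            exact Or.inr (Or.inr hje)
          · have hj' : j = 0 := by omega
            rw [hj', Walk.getVert_zero] at hje
            exact Or.inr (Or.inl hje)
        · exact Or.inl hzS
      have hstep : ∀ k, k < C.length - Sg.length →
          G.Adj (C.getVert ((cidx C p + Sg.length + k) % C.length))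
              (C.getVert ((cidx C p + Sg.length + (k + 1)) % C.length)) ∧
            s(C.getVert ((cidx C p + Sg.length + k) % C.length),
              C.getVert ((cidx C p + Sg.length + (k + 1)) % C.length)) ∉ Sg.edges := by
        intro k hk
        have hadj := cyc_adj hC (Nat.mod_lt (cidx C p + Sg.length + k) hn0)
        rw [Nat.mod_add_mod] at hadj
        refine ⟨hadj, ?_⟩
        intro he
        obtain ⟨j, hj, hej⟩ := edges_eq_consec Sg he
        rw [hSgv j (by omega), hSgv (j + 1) (by omega)] at hej
        rw [Nat.mod_eq_of_lt (show cidx C p + j < C.length by omega),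
          Nat.mod_eq_of_lt (show cidx C p + (j + 1) < C.length by omega)] at hej
        rcases Sym2.eq_iff.mp hej with ⟨h1, h2⟩ | ⟨h1, h2⟩ <;>
        · have e1 := cyc_getVert_inj hC _ (Nat.mod_lt _ hn0) _ (by omega) h1
          have e2 := cyc_getVert_inj hC _ (Nat.mod_lt _ hn0) _ (by omega) h2
          rw [hmod k (by omega)] at e1
          rw [hmod (k + 1) (by omega)] at e2
          split_ifs at e1 e2 <;> omega
      have hcover : ∀ z, z ∈ C.support → z ∈ FV Sg →
          ∃ k, k ≤ C.length - Sg.length ∧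
            z = C.getVert ((cidx C p + Sg.length + k) % C.length) := by
        intro z hz hzF
        obtain ⟨i, hi, hie⟩ := (mem_support_iff' hC).mp hz
        subst hie
        by_cases hi1 : cidx C p + Sg.length ≤ i
        · refine ⟨i - (cidx C p + Sg.length), by omega, ?_⟩
          rw [show cidx C p + Sg.length + (i - (cidx C p + Sg.length)) = i by omega,
            Nat.mod_eq_of_lt hi]
        · by_cases hi2 : i ≤ cidx C p
          · refine ⟨i + C.length - (cidx C p + Sg.length), by omega, ?_⟩
            rw [show cidx C p + Sg.length + (i + C.length - (cidx C p + Sg.length))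
              = i + C.length by omega, Nat.add_mod_right, Nat.mod_eq_of_lt hi]
          · exfalso
            have hj : i - cidx C p ≤ Sg.length := by omega
            have hmem : C.getVert i ∈ Sg.support := by
              rw [hSgmem]
              refine ⟨i - cidx C p, hj, ?_⟩
              rw [hSgv _ hj, show cidx C p + (i - cidx C p) = i by omega,
                Nat.mod_eq_of_lt hi]
            have hzF' : C.getVert i ∉ Sg.support ∨ C.getVert i = p
                ∨ C.getVert i = q := hzF
            rcases hzF' with h | h | h
            · exact h hmem
            · have hh := cidx_getVert hC hi
              rw [h] at hh
              omega
            · have hh := cidx_getVert hC hi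
              rw [h] at hh
              omega
      refine assemble hpq hG.2 hSgC hAF
        (fun k => C.getVert ((cidx C p + Sg.length + k) % C.length))
        (C.length - Sg.length) (by omega) hc0 hck hcmem hcFV hcinj
        hstep hcover ?_
      -- the q-p bridge
      intro v kv hkv1 hkv2 hveq
      have hvC : (↑↑v : V) ∈ C.support := by
        rw [hveq]
        exact (mem_support_iff' hC).mpr ⟨_, Nat.mod_lt _ hn0, rfl⟩
      have hne : ∀ m, m ≤ C.length - Sg.length → m ≠ kv →
          C.getVert ((cidx C p + Sg.length + m) % C.length) ≠ (↑↑v : V) := by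
        intro m hm hmk h
        exact hmk (hcinj m hm kv (by omega) (h.trans hveq))
      have hqFV : q ∈ FV Sg := Or.inr (Or.inr rfl)
      have hpFV : p ∈ FV Sg := Or.inr (Or.inl rfl)
      have hqnev : q ≠ (↑↑v : V) := by
        have := hne 0 (by omega) (by omega)
        rwa [hc0] at this
      have hpnev : p ≠ (↑↑v : V) := by
        have := hne (C.length - Sg.length) le_rfl (by omega)
        rwa [hck] at this
      have hchain := chainFR (Sg := Sg) v
        (fun k => C.getVert ((cidx C p + Sg.length + k) % C.length))
        (C.length - Sg.length) hcFV hstep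
      -- positions of A₀ and B₀
      have htb' : cidx C p + Sg.length ≤ lastClasp C H := by omega
      have hcB : C.getVert ((cidx C p + Sg.length
          + (lastClasp C H - (cidx C p + Sg.length))) % C.length) = B₀ := by
        rw [show cidx C p + Sg.length + (lastClasp C H - (cidx C p + Sg.length))
          = lastClasp C H by omega, Nat.mod_eq_of_lt hbn]
        refine cidx_inj hC ((mem_support_iff' hC).mpr ⟨_, hbn, rfl⟩) hB₀c.1 ?_
        rw [cidx_getVert hC hbn, hB₀i]
      have han : firstClasp C H < C.length := by omega
      have hsA : cidx C p - firstClasp C H ≤ C.length - Sg.length := by omega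
      have hcA : C.getVert ((cidx C p + Sg.length + ((C.length - Sg.length)
          - (cidx C p - firstClasp C H))) % C.length) = A₀ := by
        rw [show cidx C p + Sg.length + ((C.length - Sg.length)
            - (cidx C p - firstClasp C H)) = C.length + firstClasp C H by omega,
          Nat.add_mod_left, Nat.mod_eq_of_lt han]
        refine cidx_inj hC ((mem_support_iff' hC).mpr ⟨_, han, rfl⟩) hA₀c.1 ?_
        rw [cidx_getVert hC han, hA₀i]
      rcases Nat.lt_or_ge kv (lastClasp C H - (cidx C p + Sg.length) + 1) with hcv | hcv
      · -- case (ii) : kv ≤ kB, use the earring of q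
        obtain ⟨Kq, hKq⟩ := hqA
        have haKt : firstClasp C Kq ≤ cidx C q := firstClasp_le hKq
        have htbK : cidx C q ≤ lastClasp C Kq := le_lastClasp hC hKq
        have hbKn : lastClasp C Kq < C.length := lastClasp_lt hC (hclaspNE Kq)
        have hminK : lastClasp C H - firstClasp C H
            ≤ lastClasp C Kq - firstClasp C Kq := hmin Kq
        rcases Nat.lt_or_ge (lastClasp C H) (lastClasp C Kq) with hcase | hcase
        · obtain ⟨X, hXc, hXi⟩ := lastClasp_exists hC (hclaspNE Kq)
          have hcX : C.getVert ((cidx C p + Sg.length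
              + (lastClasp C Kq - (cidx C p + Sg.length))) % C.length) = X := by
            rw [show cidx C p + Sg.length + (lastClasp C Kq - (cidx C p + Sg.length))
              = lastClasp C Kq by omega, Nat.mod_eq_of_lt hbKn]
            refine cidx_inj hC ((mem_support_iff' hC).mpr ⟨_, hbKn, rfl⟩) hXc.1 ?_
            rw [cidx_getVert hC hbKn, hXi]
          have hXnev : X ≠ (↑↑v : V) := by
            have := hne (lastClasp C Kq - (cidx C p + Sg.length)) (by omega) (by omega)
            rwa [hcX] at this
          have hdet : FR Sg v q X := FRdetour hSgC hvC hKq hXc hqFV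
            (hAF X ⟨Kq, hXc⟩) hqnev hXnev
          have hch : FR Sg v (C.getVert ((cidx C p + Sg.length
              + (lastClasp C Kq - (cidx C p + Sg.length))) % C.length))
              (C.getVert ((cidx C p + Sg.length + (C.length - Sg.length))
                % C.length)) :=
            hchain _ _ (by omega) le_rfl (fun m hm1 hm2 => hne m hm2 (by omega))
          rw [hcX, hck] at hch
          exact hdet.trans hch
        · have haK : firstClasp C Kq ≤ firstClasp C H := by omega
          obtain ⟨Y, hYc, hYi⟩ := firstClasp_exists hC (hclaspNE Kq)
          have haKn : firstClasp C Kq < C.length := by omega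
          have hcY : C.getVert ((cidx C p + Sg.length + ((C.length - Sg.length)
              - (cidx C p - firstClasp C Kq))) % C.length) = Y := by
            rw [show cidx C p + Sg.length + ((C.length - Sg.length)
                - (cidx C p - firstClasp C Kq))
                = C.length + firstClasp C Kq by omega,
              Nat.add_mod_left, Nat.mod_eq_of_lt haKn]
            refine cidx_inj hC ((mem_support_iff' hC).mpr ⟨_, haKn, rfl⟩) hYc.1 ?_
            rw [cidx_getVert hC haKn, hYi]
          have hYnev : Y ≠ (↑↑v : V) := by
            have := hne ((C.length - Sg.length) - (cidx C p - firstClasp C Kq))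
              (by omega) (by omega)
            rwa [hcY] at this
          have hdet : FR Sg v q Y := FRdetour hSgC hvC hKq hYc hqFV
            (hAF Y ⟨Kq, hYc⟩) hqnev hYnev
          have hch : FR Sg v (C.getVert ((cidx C p + Sg.length + ((C.length
              - Sg.length) - (cidx C p - firstClasp C Kq))) % C.length))
              (C.getVert ((cidx C p + Sg.length + (C.length - Sg.length))
                % C.length)) :=
            hchain _ _ (by omega) le_rfl (fun m hm1 hm2 => hne m hm2 (by omega))
          rw [hcY, hck] at hch
          exact hdet.trans hch
      · rcases Nat.lt_or_ge kv ((C.length - Sg.length)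
          - (cidx C p - firstClasp C H)) with hcv2 | hcv2
        · -- case (i) : kB < kv < kA, use H itself
          have hBnev : B₀ ≠ (↑↑v : V) := by
            have := hne (lastClasp C H - (cidx C p + Sg.length)) (by omega) (by omega)
            rwa [hcB] at this
          have hAnev : A₀ ≠ (↑↑v : V) := by
            have := hne ((C.length - Sg.length) - (cidx C p - firstClasp C H))
              (by omega) (by omega)
            rwa [hcA] at this
          have hch1 : FR Sg v (C.getVert ((cidx C p + Sg.length + 0) % C.length))
              (C.getVert ((cidx C p + Sg.length
                + (lastClasp C H - (cidx C p + Sg.length))) % C.length)) :=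
            hchain _ _ (by omega) (by omega) (fun m hm1 hm2 => hne m (by omega) (by omega))
          have hch2 : FR Sg v (C.getVert ((cidx C p + Sg.length + ((C.length
              - Sg.length) - (cidx C p - firstClasp C H))) % C.length))
              (C.getVert ((cidx C p + Sg.length + (C.length - Sg.length))
                % C.length)) :=
            hchain _ _ (by omega) le_rfl (fun m hm1 hm2 => hne m hm2 (by omega))
          rw [hc0, hcB] at hch1
          rw [hcA, hck] at hch2
          have hdet : FR Sg v B₀ A₀ := FRdetour hSgC hvC hB₀c hA₀c
            (hAF B₀ ⟨H, hB₀c⟩) (hAF A₀ ⟨H, hA₀c⟩) hBnev hAnev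
          exact (hch1.trans hdet).trans hch2
        · -- case (iii) : kv ≥ kA, use the earring of p
          obtain ⟨Kp, hKp⟩ := hpA
          have haPs : firstClasp C Kp ≤ cidx C p := firstClasp_le hKp
          have hsbP : cidx C p ≤ lastClasp C Kp := le_lastClasp hC hKp
          have hbPn : lastClasp C Kp < C.length := lastClasp_lt hC (hclaspNE Kp)
          have hminP : lastClasp C H - firstClasp C H
              ≤ lastClasp C Kp - firstClasp C Kp := hmin Kp
          rcases Nat.lt_or_ge (firstClasp C Kp) (firstClasp C H) with hcase | hcase
          · obtain ⟨Y', hY'c, hY'i⟩ := firstClasp_exists hC (hclaspNE Kp)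
            have haPn : firstClasp C Kp < C.length := by omega
            have hcY' : C.getVert ((cidx C p + Sg.length + ((C.length - Sg.length)
                - (cidx C p - firstClasp C Kp))) % C.length) = Y' := by
              rw [show cidx C p + Sg.length + ((C.length - Sg.length)
                  - (cidx C p - firstClasp C Kp))
                  = C.length + firstClasp C Kp by omega,
                Nat.add_mod_left, Nat.mod_eq_of_lt haPn]
              refine cidx_inj hC ((mem_support_iff' hC).mpr ⟨_, haPn, rfl⟩) hY'c.1 ?_
              rw [cidx_getVert hC haPn, hY'i]
            have hY'nev : Y' ≠ (↑↑v : V) := by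
              have := hne ((C.length - Sg.length) - (cidx C p - firstClasp C Kp))
                (by omega) (by omega)
              rwa [hcY'] at this
            have hch1 : FR Sg v (C.getVert ((cidx C p + Sg.length + 0) % C.length))
                (C.getVert ((cidx C p + Sg.length + ((C.length - Sg.length)
                  - (cidx C p - firstClasp C Kp))) % C.length)) :=
              hchain _ _ (by omega) (by omega)
                (fun m hm1 hm2 => hne m (by omega) (by omega))
            rw [hc0, hcY'] at hch1
            have hdet : FR Sg v Y' p := FRdetour hSgC hvC hY'c hKp
              (hAF Y' ⟨Kp, hY'c⟩) hpFV hY'nev hpnev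
            exact hch1.trans hdet
          · have hbP : lastClasp C H ≤ lastClasp C Kp := by omega
            obtain ⟨X', hX'c, hX'i⟩ := lastClasp_exists hC (hclaspNE Kp)
            have hcX' : C.getVert ((cidx C p + Sg.length
                + (lastClasp C Kp - (cidx C p + Sg.length))) % C.length) = X' := by
              rw [show cidx C p + Sg.length
                  + (lastClasp C Kp - (cidx C p + Sg.length))
                  = lastClasp C Kp by omega, Nat.mod_eq_of_lt hbPn]
              refine cidx_inj hC ((mem_support_iff' hC).mpr ⟨_, hbPn, rfl⟩) hX'c.1 ?_
              rw [cidx_getVert hC hbPn, hX'i]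
            have hX'nev : X' ≠ (↑↑v : V) := by
              have := hne (lastClasp C Kp - (cidx C p + Sg.length)) (by omega)
                (by omega)
              rwa [hcX'] at this
            have hch1 : FR Sg v (C.getVert ((cidx C p + Sg.length + 0) % C.length))
                (C.getVert ((cidx C p + Sg.length
                  + (lastClasp C Kp - (cidx C p + Sg.length))) % C.length)) :=
              hchain _ _ (by omega) (by omega)
                (fun m hm1 hm2 => hne m (by omega) (by omega))
            rw [hc0, hcX'] at hch1
            have hdet : FR Sg v X' p := FRdetour hSgC hvC hX'c hKp
              (hAF X' ⟨Kp, hX'c⟩) hpFV hX'nev hpnev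
            exact hch1.trans hdet
    · -- wrap case
      have ho0 : cidx C o = 0 := by
        have := cidx_getVert hC hn0
        rwa [Walk.getVert_zero] at this
      have hj₀ : C.length - cidx C p ≤ Sg.length := by omega
      have hoSg : Sg.getVert (C.length - cidx C p) = o := by
        have h1 := hSgv _ hj₀
        have h2 : cidx C p + (C.length - cidx C p) = C.length := by omega
        rw [h2, Nat.mod_self, Walk.getVert_zero] at h1
        exact h1
      have hoS : o ∈ Sg.support := (hSgmem o).mpr ⟨_, hj₀, hoSg.symm⟩
      have ha0 : firstClasp C H = 0 := by
        have := (harc o hoS).1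
        rw [ho0] at this
        omega
      have hj₁ : C.length - 1 - cidx C p ≤ Sg.length := by omega
      have hw1i : cidx C (C.getVert (C.length - 1)) = C.length - 1 :=
        cidx_getVert hC (by omega)
      have hw1 : Sg.getVert (C.length - 1 - cidx C p) = C.getVert (C.length - 1) := by
        have h1 := hSgv _ hj₁
        have h2 : cidx C p + (C.length - 1 - cidx C p) = C.length - 1 := by omega
        rw [h2, Nat.mod_eq_of_lt (by omega)] at h1
        exact h1
      have hw1S : C.getVert (C.length - 1) ∈ Sg.support :=
        (hSgmem _).mpr ⟨_, hj₁, hw1.symm⟩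
      have hb : lastClasp C H = C.length - 1 := by
        have := (harc _ hw1S).2
        rw [hw1i] at this
        omega
      have hKfl : ∀ K : (earGraph C).ConnectedComponent,
          firstClasp C K = 0 ∧ lastClasp C K = C.length - 1 := by
        intro K
        have h1 := hmin K
        have h2 : lastClasp C K < C.length := lastClasp_lt hC (hclaspNE K)
        have h3 : firstClasp C K ≤ lastClasp C K := by
          obtain ⟨x, hx, hxi⟩ := firstClasp_exists hC (hclaspNE K)
          have := le_lastClasp hC hx
          omega
        unfold arcLen at h1
        rw [ha0, hb] at h1
        omega
      have hKo : ∀ K : (earGraph C).ConnectedComponent, isClasp C K o := by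
        intro K
        obtain ⟨x, hx, hxi⟩ := firstClasp_exists hC (hclaspNE K)
        have hxo : x = o := cidx_inj hC hx.1 C.start_mem_support
          (by rw [hxi, (hKfl K).1, ho0])
        rwa [hxo] at hx
      have hKw : ∀ K : (earGraph C).ConnectedComponent,
          isClasp C K (C.getVert (C.length - 1)) := by
        intro K
        obtain ⟨x, hx, hxi⟩ := lastClasp_exists hC (hclaspNE K)
        have hxo : x = C.getVert (C.length - 1) := cidx_inj hC hx.1
          ((mem_support_iff' hC).mpr ⟨_, by omega, rfl⟩)
          (by rw [hxi, (hKfl K).2, hw1i])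
        rwa [hxo] at hx
      have hoA : isAnchor C o := ⟨H, hKo H⟩
      have hopq : o = p ∨ o = q := by
        by_contra hcon
        push_neg at hcon
        exact hintA o hoS hcon.1 hcon.2 hoA
      have hoq : o = q := by
        rcases hopq with h | h
        · exfalso
          have : cidx C p = 0 := by rw [← h]; exact ho0
          omega
        · exact h
      have hw1A : isAnchor C (C.getVert (C.length - 1)) := ⟨H, hKw H⟩
      have hw1pq : C.getVert (C.length - 1) = p ∨ C.getVert (C.length - 1) = q := by
        by_contra hcon
        push_neg at hcon
        exact hintA _ hw1S hcon.1 hcon.2 hw1A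
      have hw1p : C.getVert (C.length - 1) = p := by
        rcases hw1pq with h | h
        · exact h
        · exfalso
          have h2 : cidx C q = 0 := by rw [← hoq]; exact ho0
          rw [h] at hw1i
          omega
      have hsp : cidx C p = C.length - 1 := by rw [← hw1p]; exact hw1i
      have hlen1 : Sg.length = 1 := by
        have h1 : Sg.getVert (C.length - cidx C p) = Sg.getVert Sg.length := by
          rw [hoSg, Sg.getVert_length, hoq]
        have := path_getVert_inj hSgP hj₀ le_rfl h1
        omega
      have hq0 : C.getVert 0 = q := by rw [Walk.getVert_zero]; exact hoq
      have hSg1 : Sg.getVert 1 = q := by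
        have := Sg.getVert_length
        rwa [hlen1] at this
      refine assemble hpq hG.2 hSgC hAF (fun k => C.getVert k) (C.length - 1)
        (by omega) hq0 hw1p (fun k hk => (mem_support_iff' hC).mpr ⟨k, by omega, rfl⟩)
        ?_ (fun k hk k' hk' h => cyc_getVert_inj hC k (by omega) k' (by omega) h)
        ?_ ?_ ?_
      · -- FV
        intro k hk
        by_cases hzS : C.getVert k ∈ Sg.support
        · obtain ⟨j, hj, hje⟩ := (hSgmem _).mp hzS
          rw [hlen1] at hj
          interval_cases j
          · rw [Walk.getVert_zero] at hje
            exact Or.inr (Or.inl hje)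
          · rw [hSg1] at hje
            exact Or.inr (Or.inr hje)
        · exact Or.inl hzS
      · -- step
        intro k hk
        refine ⟨C.adj_getVert_succ (by omega), ?_⟩
        intro he
        obtain ⟨j, hj, hej⟩ := edges_eq_consec Sg he
        rw [hlen1] at hj
        interval_cases j
        rw [Walk.getVert_zero, hSg1] at hej
        rw [← hq0, ← hw1p] at hej
        rcases Sym2.eq_iff.mp hej with ⟨h1, h2⟩ | ⟨h1, h2⟩
        · have := cyc_getVert_inj hC k (by omega) (C.length - 1) (by omega) h1
          omega
        · have e1 := cyc_getVert_inj hC k (by omega) 0 (by omega) h1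
          have e2 := cyc_getVert_inj hC (k + 1) (by omega) (C.length - 1) (by omega) h2
          omega
      · -- cover
        intro z hz hzF
        obtain ⟨i, hi, hie⟩ := (mem_support_iff' hC).mp hz
        exact ⟨i, by omega, hie.symm⟩
      · -- qp bridge
        intro v kv hkv1 hkv2 hveq
        have hvC : (↑↑v : V) ∈ C.support := by
          rw [hveq]
          exact (mem_support_iff' hC).mpr ⟨kv, by omega, rfl⟩
        have hqcl : isClasp C H q := by rw [← hoq]; exact hKo H
        have hpcl : isClasp C H p := by rw [← hw1p]; exact hKw H
        have hqne : q ≠ (↑↑v : V) := by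
          intro h
          rw [hveq, ← hq0] at h
          have := cyc_getVert_inj hC 0 (by omega) kv (by omega) h
          omega
        have hpne : p ≠ (↑↑v : V) := by
          intro h
          rw [hveq, ← hw1p] at h
          have := cyc_getVert_inj hC (C.length - 1) (by omega) kv (by omega) h
          omega
        exact FRdetour hSgC hvC hqcl hpcl (Or.inr (Or.inr rfl)) (Or.inr (Or.inl rfl))
          hqne hpne

end Main

end SegAux

theorem segments_in_minimum_arc_are_safe
    {V : Type*} [DecidableEq V] {G : SimpleGraph V} (hG : Graph2Conn G)
    {o : V} (C : G.Walk o o) (hC : C.IsCycle)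
    (hout : (cycOutside C).Nonempty)
    (H : (earGraph C).ConnectedComponent)
    -- H is an earring of minimum arc length
    (hmin : ∀ K, arcLen C H ≤ arcLen C K)
    -- Sg is a segment contained in the arc of H
    {p q : V} (hpq : p ≠ q) (Sg : G.Walk p q) (hSgP : Sg.IsPath)
    (hsub : ∀ e ∈ Sg.edges, e ∈ C.edges)
    (hpA : isAnchor C p) (hqA : isAnchor C q)
    (hintA : ∀ x ∈ Sg.support, x ≠ p → x ≠ q → ¬ isAnchor C x)
    (harc : ∀ x ∈ Sg.support,
      firstClasp C H ≤ cidx C x ∧ cidx C x ≤ lastClasp C H) :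
    Graph2Conn ((G.deleteEdges {e | e ∈ Sg.edges}).induce
      {x | x ∉ Sg.support ∨ x = p ∨ x = q}) := by
  classical
  rcases SegAux.Sg_dir hC hSgP hsub (SegAux.Sg_len_pos hpq) with hdir | hdir
  · exact SegAux.core hG hC hout H hmin hpq hSgP hsub hpA hqA hintA harc hdir
  · have hdir' : ∀ j < Sg.reverse.length, cidx C (Sg.reverse.getVert (j + 1))
        = (cidx C (Sg.reverse.getVert j) + 1) % C.length := by
      intro j hj
      rw [Walk.length_reverse] at hj
      rw [Walk.getVert_reverse, Walk.getVert_reverse]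
      have h1 : Sg.length - (j + 1) < Sg.length := by omega
      have h2 : Sg.length - (j + 1) + 1 = Sg.length - j := by omega
      have h3 := hdir (Sg.length - (j + 1)) h1
      rw [h2] at h3
      exact h3
    have hsub' : ∀ e ∈ Sg.reverse.edges, e ∈ C.edges := by
      intro e he
      rw [Walk.edges_reverse, List.mem_reverse] at he
      exact hsub e he
    have hintA' : ∀ x ∈ Sg.reverse.support, x ≠ q → x ≠ p → ¬ isAnchor C x := by
      intro x hx h1 h2
      rw [Walk.support_reverse, List.mem_reverse] at hx
      exact hintA x hx h2 h1
    have harc' : ∀ x ∈ Sg.reverse.support,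
        firstClasp C H ≤ cidx C x ∧ cidx C x ≤ lastClasp C H := by
      intro x hx
      rw [Walk.support_reverse, List.mem_reverse] at hx
      exact harc x hx
    have hcore := SegAux.core hG hC hout H hmin (Ne.symm hpq) hSgP.reverse hsub'
      hqA hpA hintA' harc' hdir'
    have hES : SegAux.ES Sg.reverse = SegAux.ES Sg := by
      ext e
      simp [SegAux.ES, Walk.edges_reverse]
    have hFV : SegAux.FV Sg.reverse = SegAux.FV Sg := by
      ext x
      simp only [SegAux.FV, Walk.support_reverse, List.mem_reverse, Set.mem_setOf_eq]
      tauto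
    rw [hES, hFV] at hcore
    exact hcore
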